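/- Let S ⊆ ℤ be finite, ε > 0, and let B be a finite set of integers such that ‖nα‖ ≤ ε for every n ∈ B and every α in the ε-large spectrum Spec(S, ε) := {α ∈ ℝ/ℤ : |1̂_S(α)| ≥ ε|S|}. Let μ_B := |B|⁻¹ 1_B and f := N^{1/2} · 1_S * μ_B. Then ‖N^{1/2} 1̂_S − f̂‖_∞ ≪ ε N^{1/2} |S|, i.e. sup_α |N^{1/2} 1̂_S(α) − f̂(α)| ≤ C ε N^{1/2}|S| for an absolute constant C. -/

import Mathlib

open Finset

lemma abs_exp_mul_I_sub_one_le (x : ℝ) :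
    ‖Complex.exp (x * Complex.I) - 1‖ ≤ |x| := by
  have e : Complex.exp (x * Complex.I) - 1
      = ((Real.cos x - 1 : ℝ) : ℂ) + ((Real.sin x : ℝ) : ℂ) * Complex.I := by
    rw [Complex.exp_mul_I]
    push_cast
    ring
  have h2 : (‖Complex.exp (x * Complex.I) - 1‖)^2 ≤ x^2 := by
    rw [e, Complex.sq_norm, Complex.normSq_add_mul_I]
    have hs : Real.sin (x/2)^2 ≤ (x/2)^2 := Real.sin_sq_le_sq
    have hh : Real.sin (x/2)^2 = 1/2 - Real.cos x / 2 := by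
      have h := Real.sin_sq_eq_half_sub (x/2)
      rwa [show 2*(x/2) = x by ring] at h
    have hp : Real.sin x ^2 + Real.cos x ^2 = 1 := Real.sin_sq_add_cos_sq x
    nlinarith
  have := norm_nonneg (Complex.exp (x * Complex.I) - 1)
  have := abs_nonneg x
  nlinarith [sq_abs x]

lemma one_sub_exp_two_pi (θ : ℝ) :
    ‖1 - Complex.exp (2 * Real.pi * Complex.I * θ)‖ ≤
      2 * Real.pi * |θ - round θ| := by
  have hsplit : Complex.exp (2 * Real.pi * Complex.I * θ)
      = Complex.exp (((2 * Real.pi * (θ - round θ) : ℝ) : ℂ) * Complex.I) := by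
    rw [show (2 * Real.pi * Complex.I * θ : ℂ)
        = ((2 * Real.pi * (θ - round θ) : ℝ) : ℂ) * Complex.I
          + (round θ : ℤ) * (2 * Real.pi * Complex.I) by push_cast; ring,
      Complex.exp_add, Complex.exp_int_mul_two_pi_mul_I, mul_one]
  rw [hsplit, ← norm_neg, neg_sub]
  calc ‖Complex.exp (((2 * Real.pi * (θ - round θ) : ℝ) : ℂ) * Complex.I) - 1‖
      ≤ |2 * Real.pi * (θ - round θ)| := abs_exp_mul_I_sub_one_le _
    _ = 2 * Real.pi * |θ - round θ| := by
        rw [abs_mul, abs_of_nonneg (by positivity : (0:ℝ) ≤ 2 * Real.pi)]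

theorem fourier_approx_by_convolution :
    ∃ C : ℝ, 0 < C ∧ ∀ (S B : Finset ℤ), B.Nonempty → ∀ (ε N : ℝ), 0 < ε → 1 ≤ N →
      (∀ n ∈ B, ∀ α : ℝ,
        ε * S.card ≤ ‖∑ m ∈ S, Complex.exp (2 * Real.pi * Complex.I * α * m)‖ →
        |(n : ℝ) * α - round ((n : ℝ) * α)| ≤ ε) →
      ∀ α : ℝ,
        ‖(Real.sqrt N : ℂ) *
            (∑ m ∈ S, Complex.exp (2 * Real.pi * Complex.I * α * m)) -
          ∑ p ∈ S ×ˢ B, ((Real.sqrt N / B.card : ℝ) : ℂ) *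
            Complex.exp (2 * Real.pi * Complex.I * α * (p.1 + p.2))‖ ≤
        C * ε * Real.sqrt N * S.card := by
  refine ⟨2 * Real.pi + 2, by positivity, ?_⟩
  intro S B hB ε N hε hN h α
  set z : ℤ → ℂ := fun m => Complex.exp (2 * Real.pi * Complex.I * α * m) with hz
  set T : ℂ := ∑ m ∈ S, z m with hT
  set U : ℂ := ∑ n ∈ B, z n with hU
  have hBc : (0 : ℝ) < B.card := by exact_mod_cast Finset.card_pos.2 hB
  have hBc' : (B.card : ℂ) ≠ 0 := by exact_mod_cast hBc.ne'
  have hzabs : ∀ m : ℤ, ‖z m‖ = 1 := by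
    intro m
    show ‖Complex.exp (2 * Real.pi * Complex.I * α * m)‖ = 1
    rw [show (2 * Real.pi * Complex.I * α * m : ℂ)
        = ((2 * Real.pi * α * m : ℝ) : ℂ) * Complex.I by push_cast; ring]
    exact Complex.norm_exp_ofReal_mul_I _
  have hTabs : ‖T‖ ≤ S.card := by
    calc ‖T‖ ≤ ∑ m ∈ S, ‖z m‖ := by
          exact (norm_sum_le _ _)
      _ = S.card := by simp [hzabs]
  have hprod : (∑ p ∈ S ×ˢ B, ((Real.sqrt N / B.card : ℝ) : ℂ) *
      Complex.exp (2 * Real.pi * Complex.I * α * (p.1 + p.2)))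
      = ((Real.sqrt N / B.card : ℝ) : ℂ) * T * U := by
    conv_rhs => rw [hT, hU, mul_assoc, Finset.sum_mul_sum, Finset.mul_sum]
    rw [Finset.sum_product]
    refine Finset.sum_congr rfl fun m hm => ?_
    rw [Finset.mul_sum]
    refine Finset.sum_congr rfl fun n hn => ?_
    show ((Real.sqrt N / B.card : ℝ) : ℂ) *
        Complex.exp (2 * Real.pi * Complex.I * α * ((m : ℂ) + (n : ℂ))) = _
    rw [show (2 * Real.pi * Complex.I * α * ((m : ℂ) + (n : ℂ)) : ℂ)
        = 2 * Real.pi * Complex.I * α * m + 2 * Real.pi * Complex.I * α * n by push_cast; ring,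
      Complex.exp_add, hz]
  have key : (Real.sqrt N : ℂ) * T - ((Real.sqrt N / B.card : ℝ) : ℂ) * T * U
      = (Real.sqrt N : ℂ) * T * (1 - U / B.card) := by
    push_cast
    ring
  rw [hprod, key, norm_mul, norm_mul, Complex.norm_real, Real.norm_eq_abs,
    abs_of_nonneg (Real.sqrt_nonneg N)]
  have hfactor : ‖1 - U / B.card‖
      = ‖(B.card : ℂ) - U‖ / B.card := by
    rw [show (1 : ℂ) - U / B.card = ((B.card : ℂ) - U) / B.card by field_simp,
      norm_div, Complex.norm_natCast]
  by_cases hα : ε * S.card ≤ ‖T‖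
  · -- spectrum case: |1 - U/|B|| ≤ 2πε
    have hterm : ∀ n ∈ B, ‖1 - z n‖ ≤ 2 * Real.pi * ε := by
      intro n hn
      have h1 := h n hn α hα
      have := one_sub_exp_two_pi ((n : ℝ) * α)
      rw [show (2 * Real.pi * Complex.I * ((n:ℝ) * α : ℝ) : ℂ)
          = 2 * Real.pi * Complex.I * α * n by push_cast; ring] at this
      exact this.trans (mul_le_mul_of_nonneg_left h1 (by positivity))
    have hsub : ‖(B.card : ℂ) - U‖ ≤ B.card * (2 * Real.pi * ε) := by
      calc ‖(B.card : ℂ) - U‖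
          = ‖∑ n ∈ B, (1 - z n)‖ := by
            rw [Finset.sum_sub_distrib, Finset.sum_const, nsmul_eq_mul, mul_one, hU]
        _ ≤ ∑ n ∈ B, ‖1 - z n‖ := norm_sum_le _ _
        _ ≤ ∑ _n ∈ B, 2 * Real.pi * ε := Finset.sum_le_sum hterm
        _ = B.card * (2 * Real.pi * ε) := by rw [Finset.sum_const, nsmul_eq_mul]
    have hf : ‖1 - U / B.card‖ ≤ 2 * Real.pi * ε := by
      rw [hfactor, div_le_iff₀ hBc]
      calc ‖(B.card : ℂ) - U‖ ≤ B.card * (2 * Real.pi * ε) := hsub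
        _ = 2 * Real.pi * ε * B.card := by ring
    calc Real.sqrt N * ‖T‖ * ‖1 - U / B.card‖
        ≤ Real.sqrt N * S.card * (2 * Real.pi * ε) := by
          gcongr
      _ = 2 * Real.pi * ε * Real.sqrt N * S.card := by ring
      _ ≤ (2 * Real.pi + 2) * ε * Real.sqrt N * S.card := by
          gcongr
          linarith
  · -- small case: |T| ≤ ε|S|, factor ≤ 2
    push_neg at hα
    have hUabs : ‖U‖ ≤ B.card := by
      calc ‖U‖ ≤ ∑ n ∈ B, ‖z n‖ := norm_sum_le _ _
        _ = B.card := by simp [hzabs]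
    have hf : ‖1 - U / B.card‖ ≤ 2 := by
      calc ‖1 - U / B.card‖
          ≤ ‖(1:ℂ)‖ + ‖U / B.card‖ := by
            simpa [sub_eq_add_neg] using norm_add_le 1 (-(U / (B.card:ℂ)))
        _ = 1 + ‖U‖ / B.card := by rw [norm_div, Complex.norm_natCast, norm_one]
        _ ≤ 1 + 1 := by
            have : ‖U‖ / B.card ≤ 1 := by
              rw [div_le_one hBc]; exact hUabs
            linarith
        _ = 2 := by norm_num
    calc Real.sqrt N * ‖T‖ * ‖1 - U / B.card‖
        ≤ Real.sqrt N * (ε * S.card) * 2 := by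
          gcongr
      _ = 2 * ε * Real.sqrt N * S.card := by ring
      _ ≤ (2 * Real.pi + 2) * ε * Real.sqrt N * S.card := by
          gcongr
          have := Real.pi_pos
          linarith
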